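/- arXiv:1909.06039 — 2 statements merged into one kernel-verified Lean document; each statement's English description precedes it below -/
import Mathlib

section
/- Let X be a finite nonempty set, let q : X → ℝ≥0 be a probability mass function on X (Σ_{x∈X} q(x) = 1), and let ε : X → ℝ≥0 be a nonnegative bounded function such that Σ_{x∈X} q(x)·ε(x) > 0. Define the target probability mass function p(x) := q(x)(1 + ε(x)) / Σ_{y∈X} q(y)(1 + ε(y)), set c := 1 / Σ_{x∈X} q(x)·ε(x), define the perturbation set X* := {x ∈ X : ε(x) > 0}, and define v(x) := c·q(x)·ε(x). Then v is a probability mass function supported on X*, and p can be written as the two-component mixture p(x) = (c/(1+c))·q(x) + (1/(1+c))·v(x) for all x ∈ X. -/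
/-- Proposition 3 (perturbation sampling): if the target pmf factorizes as
`p x ∝ q x * (1 + ε x)` with `q` a pmf and `ε ≥ 0` with `∑ q x * ε x > 0`, then with
`c = 1 / ∑ q x * ε x` and perturbation pmf `v x = c * q x * ε x`, `v` is a pmf supported
on the set `{x | ε x > 0}` and `p` is the mixture
`p x = (c/(1+c)) * q x + (1/(1+c)) * v x`. -/
theorem perturbation_sampling_mixture
    {X : Type*} [Fintype X] [Nonempty X]
    (q ε : X → ℝ)
    (hq_nonneg : ∀ x, 0 ≤ q x) (hq_sum : ∑ x, q x = 1)
    (hε_nonneg : ∀ x, 0 ≤ ε x) (hε_bdd : ∃ M : ℝ, ∀ x, ε x ≤ M)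
    (hpos : 0 < ∑ x, q x * ε x)
    (p v : X → ℝ) (c : ℝ)
    (hp : ∀ x, p x = q x * (1 + ε x) / ∑ y, q y * (1 + ε y))
    (hc : c = 1 / ∑ x, q x * ε x)
    (hv : ∀ x, v x = c * q x * ε x) :
    (∀ x, 0 ≤ v x) ∧ (∑ x, v x = 1) ∧ (∀ x, ¬ 0 < ε x → v x = 0) ∧
    (∀ x, p x = c / (1 + c) * q x + 1 / (1 + c) * v x) := by
  set S := ∑ x, q x * ε x with hS
  have hS0 : S ≠ 0 := ne_of_gt hpos
  have hcpos : 0 < c := by rw [hc]; positivity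
  have hsum1 : (∑ y, q y * (1 + ε y)) = 1 + S := by
    simp [mul_add, Finset.sum_add_distrib, hq_sum]
    exact hS.symm
  have h1S : (0:ℝ) < 1 + S := by linarith
  refine ⟨fun x => by rw [hv]; exact mul_nonneg (mul_nonneg hcpos.le (hq_nonneg x)) (hε_nonneg x), ?_, ?_, ?_⟩
  · simp only [hv, mul_assoc, ← Finset.mul_sum]
    rw [← hS, hc]; field_simp
  · intro x hx
    have : ε x = 0 := le_antisymm (not_lt.mp hx) (hε_nonneg x)
    simp [hv, this]
  · intro x
    rw [hp, hv, hc, hsum1]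
    field_simp
    ring
end

section
/- Let V be a finite nonempty set, φ : V → ℝ strictly positive, s : V × V → ℝ nonnegative, and define h(w) := 1 / Σ_{u∈V} φ(u)·exp(s(u,w)) for w ∈ V. Let I be a finite index set, and for each i ∈ I let x_i ∈ V and θ_i ∈ (0,1). Then for every v ∈ V: Π_{i∈I} [ (1 − θ_i)·1{x_i = v} + θ_i·h(v)·φ(x_i)·exp(s(x_i, v)) ] = ( Π_{i∈I} θ_i·φ(x_i) ) · h(v)^{|I|} · Π_{i∈I} [ exp(s(x_i, v)) + (θ_i^{−1} − 1)·1{x_i = v} / (φ(x_i)·h(x_i)) ]. -/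
/-- Factorization for perturbation sampling of the entity-attribute update
(Eqs. 17–20, Section 6.3 of d-blink): the conditional-likelihood product over the
linked records factorizes into a base term `(∏ i, θ i * φ (x i)) * (h v)^|I|` times a
perturbation factor. -/
theorem entity_attribute_factorization
    {V : Type*} [Fintype V] [Nonempty V] [DecidableEq V]
    (φ : V → ℝ) (hφ : ∀ v, 0 < φ v)
    (s : V → V → ℝ) (hs : ∀ v w, 0 ≤ s v w)
    (h : V → ℝ) (hh : ∀ w, h w = 1 / ∑ u, φ u * Real.exp (s u w))
    {I : Type*} [Fintype I]
    (x : I → V) (θ : I → ℝ) (hθ : ∀ i, 0 < θ i ∧ θ i < 1) :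
    ∀ v : V,
      (∏ i : I, ((1 - θ i) * (if x i = v then (1:ℝ) else 0) +
          θ i * (h v * φ (x i) * Real.exp (s (x i) v))))
        =
      (∏ i : I, θ i * φ (x i)) * (h v) ^ (Fintype.card I) *
        ∏ i : I, (Real.exp (s (x i) v) +
          ((θ i)⁻¹ - 1) * (if x i = v then (1:ℝ) else 0) / (φ (x i) * h (x i))) := by
  have hpos : ∀ w, 0 < h w := by
    intro w
    rw [hh w]
    apply div_pos one_pos
    exact Finset.sum_pos (fun u _ => mul_pos (hφ u) (Real.exp_pos _)) Finset.univ_nonempty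
  intro v
  have key : ∀ i : I,
      ((1 - θ i) * (if x i = v then (1:ℝ) else 0) +
          θ i * (h v * φ (x i) * Real.exp (s (x i) v)))
      = (θ i * φ (x i)) * h v *
        (Real.exp (s (x i) v) +
          ((θ i)⁻¹ - 1) * (if x i = v then (1:ℝ) else 0) / (φ (x i) * h (x i))) := by
    intro i
    by_cases hiv : x i = v
    · subst hiv
      simp only [if_pos rfl]
      have hθi := (hθ i).1.ne'
      have hφi := (hφ (x i)).ne'
      have hhi := (hpos (x i)).ne'
      field_simp
      ring
    · simp only [if_neg hiv]
      ring
  calc (∏ i : I, ((1 - θ i) * (if x i = v then (1:ℝ) else 0) +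
          θ i * (h v * φ (x i) * Real.exp (s (x i) v))))
      = ∏ i : I, ((θ i * φ (x i)) * h v *
        (Real.exp (s (x i) v) +
          ((θ i)⁻¹ - 1) * (if x i = v then (1:ℝ) else 0) / (φ (x i) * h (x i)))) :=
        Finset.prod_congr rfl (fun i _ => key i)
    _ = _ := by
        rw [Finset.prod_mul_distrib, Finset.prod_mul_distrib, Finset.prod_const,
          Finset.card_univ]
end
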